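/- Adequacy of the calculus ME_F¹ for four-valued minimal entailment with 𝓘 = {b}: for finite F-theories Γ and Δ, Γ ⊨^{b}_F Δ holds if and only if the sequent ∅;Γ,∅̄⇒Δ;Var(Γ∪Δ) is provable in ME_F¹, where Var(Γ∪Δ) is the set of all atoms occurring in formulas of Γ or Δ. -/
import Mathlib


/-- Truth values of the four-valued logic F: f, n, b, t, where in the truth
order f is least, t is greatest, and n, b are incomparable. -/
inductive V4 : Type
  | f | n | b | t
deriving DecidableEq, Repr

namespace V4

/-- Negation: f ↦ t, t ↦ f, and n, b are fixed. -/
def negv : V4 → V4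
  | .f => .t
  | .t => .f
  | .n => .n
  | .b => .b

/-- Conjunction: the meet with respect to the truth order (f least, t
greatest, n and b incomparable, so the meet of n and b is f). -/
def conjv : V4 → V4 → V4
  | .t, y => y
  | .f, _ => .f
  | .n, .t => .n
  | .n, .n => .n
  | .n, .b => .f
  | .n, .f => .f
  | .b, .t => .b
  | .b, .b => .b
  | .b, .n => .f
  | .b, .f => .f

/-- Implication: `x ⊃ y` is `y` if `x` is designated (b or t), and `t`
otherwise. -/
def impv : V4 → V4 → V4
  | .b, y => y
  | .t, y => y
  | .f, _ => .t
  | .n, _ => .t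

end V4

/-- Formulas of the four-valued logic F, with atoms indexed by ℕ, the
constants B and N, negation, conjunction, and implication. -/
inductive FForm : Type
  | atom : ℕ → FForm
  | bb : FForm
  | nn : FForm
  | neg : FForm → FForm
  | conj : FForm → FForm → FForm
  | imp : FForm → FForm → FForm
deriving DecidableEq

namespace FForm

/-- The valuation of F extending an interpretation `I : ℕ → V4`. -/
def val (I : ℕ → V4) : FForm → V4
  | atom p => I p
  | bb => .b
  | nn => .n
  | neg φ => (φ.val I).negv
  | conj φ ψ => (φ.val I).conjv (ψ.val I)
  | imp φ ψ => (φ.val I).impv (ψ.val I)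

/-- `I` is an F-model of `φ`: `v_I(φ)` is designated, i.e. b or t. -/
def IsModel (I : ℕ → V4) (φ : FForm) : Prop := φ.val I = .b ∨ φ.val I = .t

/-- `I` is an F-model of the theory `Γ`. -/
def IsModelSet (I : ℕ → V4) (Γ : Set FForm) : Prop := ∀ φ ∈ Γ, IsModel I φ

end FForm

/-- An F-sequent `Γ₁ | Γ₂ | Γ₃ | Γ₄` is true under `I` if some formula of `Γ₁`
takes value f, or of `Γ₂` value n, or of `Γ₃` value b, or of `Γ₄` value t. -/
def FSeqTrue (I : ℕ → V4) (Γ₁ Γ₂ Γ₃ Γ₄ : Finset FForm) : Prop :=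
  (∃ φ ∈ Γ₁, φ.val I = .f) ∨ (∃ φ ∈ Γ₂, φ.val I = .n) ∨
  (∃ φ ∈ Γ₃, φ.val I = .b) ∨ (∃ φ ∈ Γ₄, φ.val I = .t)

/-- An F-sequent is valid if it is true under every interpretation. -/
def FSeqValid (Γ₁ Γ₂ Γ₃ Γ₄ : Finset FForm) : Prop := ∀ I, FSeqTrue I Γ₁ Γ₂ Γ₃ Γ₄

/-- The sequent calculus `S_F` for the four-valued logic F (components in the
order f | n | b | t). -/
inductive SF : Finset FForm → Finset FForm → Finset FForm → Finset FForm → Prop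
  | ax (Γ Δ Θ Ω : Finset FForm) (φ : FForm) :
      SF (insert φ Γ) (insert φ Δ) (insert φ Θ) (insert φ Ω)
  | axN (Γ Δ Θ Ω : Finset FForm) :
      SF Γ (insert .nn Δ) Θ Ω
  | axB (Γ Δ Θ Ω : Finset FForm) :
      SF Γ Δ (insert .bb Θ) Ω
  | negF {Γ Δ Θ Ω : Finset FForm} {φ : FForm} :
      SF Γ Δ Θ (insert φ Ω) → SF (insert (.neg φ) Γ) Δ Θ Ω
  | negN {Γ Δ Θ Ω : Finset FForm} {φ : FForm} :
      SF Γ (insert φ Δ) Θ Ω → SF Γ (insert (.neg φ) Δ) Θ Ω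
  | negB {Γ Δ Θ Ω : Finset FForm} {φ : FForm} :
      SF Γ Δ (insert φ Θ) Ω → SF Γ Δ (insert (.neg φ) Θ) Ω
  | negT {Γ Δ Θ Ω : Finset FForm} {φ : FForm} :
      SF (insert φ Γ) Δ Θ Ω → SF Γ Δ Θ (insert (.neg φ) Ω)
  | conjF {Γ Δ Θ Ω : Finset FForm} {φ ψ : FForm} :
      SF (insert φ (insert ψ Γ)) (insert φ (insert ψ Δ)) Θ Ω →
      SF (insert φ (insert ψ Γ)) Δ (insert φ (insert ψ Θ)) Ω →
      SF (insert (.conj φ ψ) Γ) Δ Θ Ω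
  | conjN {Γ Δ Θ Ω : Finset FForm} {φ ψ : FForm} :
      SF Γ (insert φ (insert ψ Δ)) Θ Ω →
      SF Γ (insert φ Δ) Θ (insert φ Ω) →
      SF Γ (insert ψ Δ) Θ (insert ψ Ω) →
      SF Γ (insert (.conj φ ψ) Δ) Θ Ω
  | conjB {Γ Δ Θ Ω : Finset FForm} {φ ψ : FForm} :
      SF Γ Δ (insert φ (insert ψ Θ)) Ω →
      SF Γ Δ (insert φ Θ) (insert φ Ω) →
      SF Γ Δ (insert ψ Θ) (insert ψ Ω) →
      SF Γ Δ (insert (.conj φ ψ) Θ) Ω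
  | conjT {Γ Δ Θ Ω : Finset FForm} {φ ψ : FForm} :
      SF Γ Δ Θ (insert φ Ω) → SF Γ Δ Θ (insert ψ Ω) →
      SF Γ Δ Θ (insert (.conj φ ψ) Ω)
  | impF {Γ Δ Θ Ω : Finset FForm} {φ ψ : FForm} :
      SF Γ Δ (insert φ Θ) (insert φ Ω) → SF (insert ψ Γ) Δ Θ Ω →
      SF (insert (.imp φ ψ) Γ) Δ Θ Ω
  | impN {Γ Δ Θ Ω : Finset FForm} {φ ψ : FForm} :
      SF Γ Δ (insert φ Θ) (insert φ Ω) → SF Γ (insert ψ Δ) Θ Ω →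
      SF Γ (insert (.imp φ ψ) Δ) Θ Ω
  | impB {Γ Δ Θ Ω : Finset FForm} {φ ψ : FForm} :
      SF Γ Δ (insert φ Θ) (insert φ Ω) → SF Γ Δ (insert ψ Θ) Ω →
      SF Γ Δ (insert (.imp φ ψ) Θ) Ω
  | impT {Γ Δ Θ Ω : Finset FForm} {φ ψ : FForm} :
      SF (insert φ Γ) (insert φ Δ) Θ (insert ψ Ω) →
      SF Γ Δ Θ (insert (.imp φ ψ) Ω)
  | wF {Γ Δ Θ Ω : Finset FForm} (φ : FForm) :
      SF Γ Δ Θ Ω → SF (insert φ Γ) Δ Θ Ω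
  | wN {Γ Δ Θ Ω : Finset FForm} (φ : FForm) :
      SF Γ Δ Θ Ω → SF Γ (insert φ Δ) Θ Ω
  | wB {Γ Δ Θ Ω : Finset FForm} (φ : FForm) :
      SF Γ Δ Θ Ω → SF Γ Δ (insert φ Θ) Ω
  | wT {Γ Δ Θ Ω : Finset FForm} (φ : FForm) :
      SF Γ Δ Θ Ω → SF Γ Δ Θ (insert φ Ω)


/-- An F-anti-sequent `Γ₁ ∤ Γ₂ ∤ Γ₃ ∤ Γ₄` is refuted by `I` if no formula of
`Γ₁` takes value f, none of `Γ₂` value n, none of `Γ₃` value b, and none of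
`Γ₄` value t. -/
def FAntiRefutedBy (I : ℕ → V4) (Γ₁ Γ₂ Γ₃ Γ₄ : Finset FForm) : Prop :=
  (∀ φ ∈ Γ₁, φ.val I ≠ .f) ∧ (∀ φ ∈ Γ₂, φ.val I ≠ .n) ∧
  (∀ φ ∈ Γ₃, φ.val I ≠ .b) ∧ (∀ φ ∈ Γ₄, φ.val I ≠ .t)

/-- An F-anti-sequent is refutable if some interpretation refutes it. -/
def FAntiRefutable (Γ₁ Γ₂ Γ₃ Γ₄ : Finset FForm) : Prop :=
  ∃ I, FAntiRefutedBy I Γ₁ Γ₂ Γ₃ Γ₄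

/-- A formula that is an atom or one of the constants B, N. -/
def FForm.IsBasic : FForm → Prop
  | .atom _ => True
  | .bb => True
  | .nn => True
  | _ => False

/-- The anti-sequent calculus `R_F` for the four-valued logic F (components in
the order f ∤ n ∤ b ∤ t). -/
inductive RF : Finset FForm → Finset FForm → Finset FForm → Finset FForm → Prop
  | ax (Γ Δ Θ Ω : Finset FForm) :
      (∀ φ ∈ Γ ∪ Δ ∪ Θ ∪ Ω, φ.IsBasic) → Γ ∩ Δ ∩ Θ ∩ Ω = ∅ →
      .nn ∉ Δ → .bb ∉ Θ →
      RF Γ Δ Θ Ω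
  | negF {Γ Δ Θ Ω : Finset FForm} {φ : FForm} :
      RF Γ Δ Θ (insert φ Ω) → RF (insert (.neg φ) Γ) Δ Θ Ω
  | negN {Γ Δ Θ Ω : Finset FForm} {φ : FForm} :
      RF Γ (insert φ Δ) Θ Ω → RF Γ (insert (.neg φ) Δ) Θ Ω
  | negB {Γ Δ Θ Ω : Finset FForm} {φ : FForm} :
      RF Γ Δ (insert φ Θ) Ω → RF Γ Δ (insert (.neg φ) Θ) Ω
  | negT {Γ Δ Θ Ω : Finset FForm} {φ : FForm} :
      RF (insert φ Γ) Δ Θ Ω → RF Γ Δ Θ (insert (.neg φ) Ω)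
  | conjF1 {Γ Δ Θ Ω : Finset FForm} {φ ψ : FForm} :
      RF (insert φ (insert ψ Γ)) (insert φ (insert ψ Δ)) Θ Ω →
      RF (insert (.conj φ ψ) Γ) Δ Θ Ω
  | conjF2 {Γ Δ Θ Ω : Finset FForm} {φ ψ : FForm} :
      RF (insert φ (insert ψ Γ)) Δ (insert φ (insert ψ Θ)) Ω →
      RF (insert (.conj φ ψ) Γ) Δ Θ Ω
  | conjN1 {Γ Δ Θ Ω : Finset FForm} {φ ψ : FForm} :
      RF Γ (insert φ (insert ψ Δ)) Θ Ω → RF Γ (insert (.conj φ ψ) Δ) Θ Ω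
  | conjN2 {Γ Δ Θ Ω : Finset FForm} {φ ψ : FForm} :
      RF Γ (insert φ Δ) Θ (insert φ Ω) → RF Γ (insert (.conj φ ψ) Δ) Θ Ω
  | conjN3 {Γ Δ Θ Ω : Finset FForm} {φ ψ : FForm} :
      RF Γ (insert ψ Δ) Θ (insert ψ Ω) → RF Γ (insert (.conj φ ψ) Δ) Θ Ω
  | conjB1 {Γ Δ Θ Ω : Finset FForm} {φ ψ : FForm} :
      RF Γ Δ (insert φ (insert ψ Θ)) Ω → RF Γ Δ (insert (.conj φ ψ) Θ) Ω
  | conjB2 {Γ Δ Θ Ω : Finset FForm} {φ ψ : FForm} :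
      RF Γ Δ (insert φ Θ) (insert φ Ω) → RF Γ Δ (insert (.conj φ ψ) Θ) Ω
  | conjB3 {Γ Δ Θ Ω : Finset FForm} {φ ψ : FForm} :
      RF Γ Δ (insert ψ Θ) (insert ψ Ω) → RF Γ Δ (insert (.conj φ ψ) Θ) Ω
  | conjT1 {Γ Δ Θ Ω : Finset FForm} {φ ψ : FForm} :
      RF Γ Δ Θ (insert φ Ω) → RF Γ Δ Θ (insert (.conj φ ψ) Ω)
  | conjT2 {Γ Δ Θ Ω : Finset FForm} {φ ψ : FForm} :
      RF Γ Δ Θ (insert ψ Ω) → RF Γ Δ Θ (insert (.conj φ ψ) Ω)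
  | impF1 {Γ Δ Θ Ω : Finset FForm} {φ ψ : FForm} :
      RF Γ Δ (insert φ Θ) (insert φ Ω) → RF (insert (.imp φ ψ) Γ) Δ Θ Ω
  | impF2 {Γ Δ Θ Ω : Finset FForm} {φ ψ : FForm} :
      RF (insert ψ Γ) Δ Θ Ω → RF (insert (.imp φ ψ) Γ) Δ Θ Ω
  | impN1 {Γ Δ Θ Ω : Finset FForm} {φ ψ : FForm} :
      RF Γ Δ (insert φ Θ) (insert φ Ω) → RF Γ (insert (.imp φ ψ) Δ) Θ Ω
  | impN2 {Γ Δ Θ Ω : Finset FForm} {φ ψ : FForm} :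
      RF Γ (insert ψ Δ) Θ Ω → RF Γ (insert (.imp φ ψ) Δ) Θ Ω
  | impB1 {Γ Δ Θ Ω : Finset FForm} {φ ψ : FForm} :
      RF Γ Δ (insert φ Θ) (insert φ Ω) → RF Γ Δ (insert (.imp φ ψ) Θ) Ω
  | impB2 {Γ Δ Θ Ω : Finset FForm} {φ ψ : FForm} :
      RF Γ Δ (insert ψ Θ) Ω → RF Γ Δ (insert (.imp φ ψ) Θ) Ω
  | impT {Γ Δ Θ Ω : Finset FForm} {φ ψ : FForm} :
      RF (insert φ Γ) (insert φ Δ) Θ (insert ψ Ω) →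
      RF Γ Δ Θ (insert (.imp φ ψ) Ω)


/-- The set of atoms occurring in an F-formula. -/
def FForm.fvars : FForm → Finset ℕ
  | .atom p => {p}
  | .bb => ∅
  | .nn => ∅
  | .neg φ => φ.fvars
  | .conj φ ψ => φ.fvars ∪ ψ.fvars
  | .imp φ ψ => φ.fvars ∪ ψ.fvars

/-- `I` is an F-model of `Γ` that is most consistent relative to `𝓘 ⊆ V4`:
no F-model `J` of `Γ` makes a strictly smaller set of atoms take a value
in `𝓘`. -/
def FMostConsistentModel (𝓘 : Set V4) (I : ℕ → V4) (Γ : Set FForm) : Prop :=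
  FForm.IsModelSet I Γ ∧
    ¬ ∃ J : ℕ → V4, FForm.IsModelSet J Γ ∧ {p : ℕ | J p ∈ 𝓘} ⊂ {p : ℕ | I p ∈ 𝓘}

/-- `Γ ⊨^𝓘_F Δ`: every F-model of `Γ` most consistent relative to `𝓘` is an
F-model of some member of `Δ`. -/
def FMinEntails (𝓘 : Set V4) (Γ Δ : Set FForm) : Prop :=
  ∀ I, FMostConsistentModel 𝓘 I Γ → ∃ δ ∈ Δ, FForm.IsModel I δ

/-- The calculus `ME_F¹` on sequents `Σ;Γ,Π̄⇒Δ;Θ` (arguments in the order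
`Σ Γ Π Δ Θ`, where `Π` records the atoms required not to take a value in
`𝓘 = {b}`), with rules (m1†), (m2†) and (m3). -/
inductive MEF1 : Finset ℕ → Finset FForm → Finset ℕ → Finset FForm → Finset ℕ → Prop
  | m1 {S Pi Θ : Finset ℕ} {Γ Δ : Finset FForm} {q : ℕ} :
      RF Γ Γ ((insert q (Θ ∪ Pi)).image FForm.atom) ∅ →
      MEF1 (insert q S) Γ Pi Δ Θ
  | m2 {S Pi Θ : Finset ℕ} {Γ Δ : Finset FForm} :
      SF (S.image FForm.atom ∪ Γ) (S.image FForm.atom ∪ Γ)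
         (Pi.image FForm.atom ∪ Δ) (S.image FForm.atom ∪ Δ) →
      MEF1 S Γ Pi Δ Θ
  | m3 {S Pi Θ : Finset ℕ} {Γ Δ : Finset FForm} {q : ℕ} :
      MEF1 (insert q S) Γ Pi Δ Θ →
      MEF1 S Γ (insert q Pi) Δ Θ →
      MEF1 S Γ Pi Δ (insert q Θ)

lemma FSeqTrue_insert1 {I : ℕ → V4} {Γ₁ Γ₂ Γ₃ Γ₄ : Finset FForm} {φ : FForm} :
    FSeqTrue I (insert φ Γ₁) Γ₂ Γ₃ Γ₄ ↔ φ.val I = .f ∨ FSeqTrue I Γ₁ Γ₂ Γ₃ Γ₄ := by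
  unfold FSeqTrue; rw [Finset.exists_mem_insert]
  generalize (∃ x ∈ Γ₁, FForm.val I x = V4.f) = A
  generalize (∃ x ∈ Γ₂, FForm.val I x = V4.n) = B
  generalize (∃ x ∈ Γ₃, FForm.val I x = V4.b) = C
  generalize (∃ x ∈ Γ₄, FForm.val I x = V4.t) = D
  tauto

lemma FSeqTrue_insert2 {I : ℕ → V4} {Γ₁ Γ₂ Γ₃ Γ₄ : Finset FForm} {φ : FForm} :
    FSeqTrue I Γ₁ (insert φ Γ₂) Γ₃ Γ₄ ↔ φ.val I = .n ∨ FSeqTrue I Γ₁ Γ₂ Γ₃ Γ₄ := by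
  unfold FSeqTrue; rw [Finset.exists_mem_insert]
  generalize (∃ x ∈ Γ₁, FForm.val I x = V4.f) = A
  generalize (∃ x ∈ Γ₂, FForm.val I x = V4.n) = B
  generalize (∃ x ∈ Γ₃, FForm.val I x = V4.b) = C
  generalize (∃ x ∈ Γ₄, FForm.val I x = V4.t) = D
  tauto

lemma FSeqTrue_insert3 {I : ℕ → V4} {Γ₁ Γ₂ Γ₃ Γ₄ : Finset FForm} {φ : FForm} :
    FSeqTrue I Γ₁ Γ₂ (insert φ Γ₃) Γ₄ ↔ φ.val I = .b ∨ FSeqTrue I Γ₁ Γ₂ Γ₃ Γ₄ := by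
  unfold FSeqTrue; rw [Finset.exists_mem_insert]
  generalize (∃ x ∈ Γ₁, FForm.val I x = V4.f) = A
  generalize (∃ x ∈ Γ₂, FForm.val I x = V4.n) = B
  generalize (∃ x ∈ Γ₃, FForm.val I x = V4.b) = C
  generalize (∃ x ∈ Γ₄, FForm.val I x = V4.t) = D
  tauto

lemma FSeqTrue_insert4 {I : ℕ → V4} {Γ₁ Γ₂ Γ₃ Γ₄ : Finset FForm} {φ : FForm} :
    FSeqTrue I Γ₁ Γ₂ Γ₃ (insert φ Γ₄) ↔ φ.val I = .t ∨ FSeqTrue I Γ₁ Γ₂ Γ₃ Γ₄ := by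
  unfold FSeqTrue; rw [Finset.exists_mem_insert]
  generalize (∃ x ∈ Γ₁, FForm.val I x = V4.f) = A
  generalize (∃ x ∈ Γ₂, FForm.val I x = V4.n) = B
  generalize (∃ x ∈ Γ₃, FForm.val I x = V4.b) = C
  generalize (∃ x ∈ Γ₄, FForm.val I x = V4.t) = D
  tauto

theorem SF_sound {Γ₁ Γ₂ Γ₃ Γ₄ : Finset FForm} (h : SF Γ₁ Γ₂ Γ₃ Γ₄) :
    FSeqValid Γ₁ Γ₂ Γ₃ Γ₄ := by
  induction h with
  | ax Γ Δ Θ Ω φ =>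
    intro I
    cases h : φ.val I <;>
      simp [FSeqTrue_insert1, FSeqTrue_insert2, FSeqTrue_insert3, FSeqTrue_insert4, h]
  | axN Γ Δ Θ Ω =>
    intro I; simp [FSeqTrue_insert2, FForm.val]
  | axB Γ Δ Θ Ω =>
    intro I; simp [FSeqTrue_insert3, FForm.val]
  | @negF Γ Δ Θ Ω φ h ih =>
    intro I; have t := ih I
    simp only [FSeqTrue_insert1, FSeqTrue_insert4, FForm.val] at *
    rcases hv : φ.val I <;> simp_all [V4.negv]
  | @negN Γ Δ Θ Ω φ h ih =>
    intro I; have t := ih I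
    simp only [FSeqTrue_insert2, FForm.val] at *
    rcases hv : φ.val I <;> simp_all [V4.negv]
  | @negB Γ Δ Θ Ω φ h ih =>
    intro I; have t := ih I
    simp only [FSeqTrue_insert3, FForm.val] at *
    rcases hv : φ.val I <;> simp_all [V4.negv]
  | @negT Γ Δ Θ Ω φ h ih =>
    intro I; have t := ih I
    simp only [FSeqTrue_insert1, FSeqTrue_insert4, FForm.val] at *
    rcases hv : φ.val I <;> simp_all [V4.negv]
  | @conjF Γ Δ Θ Ω φ ψ h1 h2 ih1 ih2 =>
    intro I; have t1 := ih1 I; have t2 := ih2 I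
    simp only [FSeqTrue_insert1, FSeqTrue_insert2, FSeqTrue_insert3, FSeqTrue_insert4,
      FForm.val] at *
    rcases hφ : φ.val I <;> rcases hψ : ψ.val I <;> simp_all [V4.conjv]
  | @conjN Γ Δ Θ Ω φ ψ h1 h2 h3 ih1 ih2 ih3 =>
    intro I; have t1 := ih1 I; have t2 := ih2 I; have t3 := ih3 I
    simp only [FSeqTrue_insert1, FSeqTrue_insert2, FSeqTrue_insert3, FSeqTrue_insert4,
      FForm.val] at *
    rcases hφ : φ.val I <;> rcases hψ : ψ.val I <;> simp_all [V4.conjv]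
  | @conjB Γ Δ Θ Ω φ ψ h1 h2 h3 ih1 ih2 ih3 =>
    intro I; have t1 := ih1 I; have t2 := ih2 I; have t3 := ih3 I
    simp only [FSeqTrue_insert1, FSeqTrue_insert2, FSeqTrue_insert3, FSeqTrue_insert4,
      FForm.val] at *
    rcases hφ : φ.val I <;> rcases hψ : ψ.val I <;> simp_all [V4.conjv]
  | @conjT Γ Δ Θ Ω φ ψ h1 h2 ih1 ih2 =>
    intro I; have t1 := ih1 I; have t2 := ih2 I
    simp only [FSeqTrue_insert1, FSeqTrue_insert2, FSeqTrue_insert3, FSeqTrue_insert4,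
      FForm.val] at *
    rcases hφ : φ.val I <;> rcases hψ : ψ.val I <;> simp_all [V4.conjv]
  | @impF Γ Δ Θ Ω φ ψ h1 h2 ih1 ih2 =>
    intro I; have t1 := ih1 I; have t2 := ih2 I
    simp only [FSeqTrue_insert1, FSeqTrue_insert2, FSeqTrue_insert3, FSeqTrue_insert4,
      FForm.val] at *
    rcases hφ : φ.val I <;> rcases hψ : ψ.val I <;> simp_all [V4.impv]
  | @impN Γ Δ Θ Ω φ ψ h1 h2 ih1 ih2 =>
    intro I; have t1 := ih1 I; have t2 := ih2 I
    simp only [FSeqTrue_insert1, FSeqTrue_insert2, FSeqTrue_insert3, FSeqTrue_insert4,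
      FForm.val] at *
    rcases hφ : φ.val I <;> rcases hψ : ψ.val I <;> simp_all [V4.impv]
  | @impB Γ Δ Θ Ω φ ψ h1 h2 ih1 ih2 =>
    intro I; have t1 := ih1 I; have t2 := ih2 I
    simp only [FSeqTrue_insert1, FSeqTrue_insert2, FSeqTrue_insert3, FSeqTrue_insert4,
      FForm.val] at *
    rcases hφ : φ.val I <;> rcases hψ : ψ.val I <;> simp_all [V4.impv]
  | @impT Γ Δ Θ Ω φ ψ h1 ih1 =>
    intro I; have t1 := ih1 I
    simp only [FSeqTrue_insert1, FSeqTrue_insert2, FSeqTrue_insert3, FSeqTrue_insert4,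
      FForm.val] at *
    rcases hφ : φ.val I <;> rcases hψ : ψ.val I <;> simp_all [V4.impv]
  | wF φ h ih =>
    intro I; rw [FSeqTrue_insert1]; exact Or.inr (ih I)
  | wN φ h ih =>
    intro I; rw [FSeqTrue_insert2]; exact Or.inr (ih I)
  | wB φ h ih =>
    intro I; rw [FSeqTrue_insert3]; exact Or.inr (ih I)
  | wT φ h ih =>
    intro I; rw [FSeqTrue_insert4]; exact Or.inr (ih I)
lemma RefBy_insert1 {I : ℕ → V4} {Γ₁ Γ₂ Γ₃ Γ₄ : Finset FForm} {φ : FForm} :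
    FAntiRefutedBy I (insert φ Γ₁) Γ₂ Γ₃ Γ₄ ↔
      φ.val I ≠ .f ∧ FAntiRefutedBy I Γ₁ Γ₂ Γ₃ Γ₄ := by
  unfold FAntiRefutedBy; rw [Finset.forall_mem_insert]; tauto

lemma RefBy_insert2 {I : ℕ → V4} {Γ₁ Γ₂ Γ₃ Γ₄ : Finset FForm} {φ : FForm} :
    FAntiRefutedBy I Γ₁ (insert φ Γ₂) Γ₃ Γ₄ ↔
      φ.val I ≠ .n ∧ FAntiRefutedBy I Γ₁ Γ₂ Γ₃ Γ₄ := by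
  unfold FAntiRefutedBy; rw [Finset.forall_mem_insert]; tauto

lemma RefBy_insert3 {I : ℕ → V4} {Γ₁ Γ₂ Γ₃ Γ₄ : Finset FForm} {φ : FForm} :
    FAntiRefutedBy I Γ₁ Γ₂ (insert φ Γ₃) Γ₄ ↔
      φ.val I ≠ .b ∧ FAntiRefutedBy I Γ₁ Γ₂ Γ₃ Γ₄ := by
  unfold FAntiRefutedBy; rw [Finset.forall_mem_insert]; tauto

lemma RefBy_insert4 {I : ℕ → V4} {Γ₁ Γ₂ Γ₃ Γ₄ : Finset FForm} {φ : FForm} :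
    FAntiRefutedBy I Γ₁ Γ₂ Γ₃ (insert φ Γ₄) ↔
      φ.val I ≠ .t ∧ FAntiRefutedBy I Γ₁ Γ₂ Γ₃ Γ₄ := by
  unfold FAntiRefutedBy; rw [Finset.forall_mem_insert]; tauto

/-- The canonical refuting interpretation for a basic anti-sequent axiom. -/
def axInterp (Γ Δ Θ : Finset FForm) : ℕ → V4 := fun p =>
  if FForm.atom p ∉ Γ then .f
  else if FForm.atom p ∉ Δ then .n
  else if FForm.atom p ∉ Θ then .b
  else .t

lemma axRefuted {Γ Δ Θ Ω : Finset FForm}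
    (hb : ∀ φ ∈ Γ ∪ Δ ∪ Θ ∪ Ω, φ.IsBasic) (hi : Γ ∩ Δ ∩ Θ ∩ Ω = ∅)
    (hn : FForm.nn ∉ Δ) (hbb : FForm.bb ∉ Θ) :
    FAntiRefutedBy (axInterp Γ Δ Θ) Γ Δ Θ Ω := by
  have hmem : ∀ φ, φ ∈ Γ → φ ∈ Δ → φ ∈ Θ → φ ∈ Ω → False := by
    intro φ h1 h2 h3 h4
    have : φ ∈ Γ ∩ Δ ∩ Θ ∩ Ω := by simp [Finset.mem_inter, h1, h2, h3, h4]
    rw [hi] at this; exact absurd this (Finset.notMem_empty φ)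
  refine ⟨?_, ?_, ?_, ?_⟩ <;> intro φ hφ
  · have hbφ := hb φ (by simp [Finset.mem_union, hφ])
    match φ, hbφ with
    | .atom p, _ =>
      simp only [FForm.val, axInterp]
      split_ifs with h1 h2 h3 <;> simp_all
    | .bb, _ => simp [FForm.val]
    | .nn, _ => simp [FForm.val]
  · have hbφ := hb φ (by simp [Finset.mem_union, hφ])
    match φ, hbφ with
    | .atom p, _ =>
      simp only [FForm.val, axInterp]
      split_ifs with h1 h2 h3 <;> simp_all
    | .bb, _ => simp [FForm.val]
    | .nn, _ => exact absurd hφ hn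
  · have hbφ := hb φ (by simp [Finset.mem_union, hφ])
    match φ, hbφ with
    | .atom p, _ =>
      simp only [FForm.val, axInterp]
      split_ifs with h1 h2 h3 <;> simp_all
    | .bb, _ => exact absurd hφ hbb
    | .nn, _ => simp [FForm.val]
  · have hbφ := hb φ (by simp [Finset.mem_union, hφ])
    match φ, hbφ with
    | .atom p, _ =>
      simp only [FForm.val, axInterp]
      split_ifs with h1 h2 h3 <;> simp_all
    | .bb, _ => simp [FForm.val]
    | .nn, _ => simp [FForm.val]

theorem RF_sound {Γ₁ Γ₂ Γ₃ Γ₄ : Finset FForm} (h : RF Γ₁ Γ₂ Γ₃ Γ₄) :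
    FAntiRefutable Γ₁ Γ₂ Γ₃ Γ₄ := by
  induction h with
  | ax Γ Δ Θ Ω hb hi hn hbb => exact ⟨axInterp Γ Δ Θ, axRefuted hb hi hn hbb⟩
  | @negF Γ Δ Θ Ω φ h ih =>
    obtain ⟨I, hI⟩ := ih; refine ⟨I, ?_⟩; revert hI
    simp only [RefBy_insert1, RefBy_insert4, FForm.val]
    rcases hv : φ.val I <;> simp_all [V4.negv]
  | @negN Γ Δ Θ Ω φ h ih =>
    obtain ⟨I, hI⟩ := ih; refine ⟨I, ?_⟩; revert hI
    simp only [RefBy_insert2, FForm.val]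
    rcases hv : φ.val I <;> simp_all [V4.negv]
  | @negB Γ Δ Θ Ω φ h ih =>
    obtain ⟨I, hI⟩ := ih; refine ⟨I, ?_⟩; revert hI
    simp only [RefBy_insert3, FForm.val]
    rcases hv : φ.val I <;> simp_all [V4.negv]
  | @negT Γ Δ Θ Ω φ h ih =>
    obtain ⟨I, hI⟩ := ih; refine ⟨I, ?_⟩; revert hI
    simp only [RefBy_insert1, RefBy_insert4, FForm.val]
    rcases hv : φ.val I <;> simp_all [V4.negv]
  | @conjF1 Γ Δ Θ Ω φ ψ h ih =>
    obtain ⟨I, hI⟩ := ih; refine ⟨I, ?_⟩; revert hI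
    simp only [RefBy_insert1, RefBy_insert2, RefBy_insert3, RefBy_insert4, FForm.val]
    rcases hφ : φ.val I <;> rcases hψ : ψ.val I <;> simp_all [V4.conjv]
  | @conjF2 Γ Δ Θ Ω φ ψ h ih =>
    obtain ⟨I, hI⟩ := ih; refine ⟨I, ?_⟩; revert hI
    simp only [RefBy_insert1, RefBy_insert2, RefBy_insert3, RefBy_insert4, FForm.val]
    rcases hφ : φ.val I <;> rcases hψ : ψ.val I <;> simp_all [V4.conjv]
  | @conjN1 Γ Δ Θ Ω φ ψ h ih =>
    obtain ⟨I, hI⟩ := ih; refine ⟨I, ?_⟩; revert hI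
    simp only [RefBy_insert1, RefBy_insert2, RefBy_insert3, RefBy_insert4, FForm.val]
    rcases hφ : φ.val I <;> rcases hψ : ψ.val I <;> simp_all [V4.conjv]
  | @conjN2 Γ Δ Θ Ω φ ψ h ih =>
    obtain ⟨I, hI⟩ := ih; refine ⟨I, ?_⟩; revert hI
    simp only [RefBy_insert1, RefBy_insert2, RefBy_insert3, RefBy_insert4, FForm.val]
    rcases hφ : φ.val I <;> rcases hψ : ψ.val I <;> simp_all [V4.conjv]
  | @conjN3 Γ Δ Θ Ω φ ψ h ih =>
    obtain ⟨I, hI⟩ := ih; refine ⟨I, ?_⟩; revert hI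
    simp only [RefBy_insert1, RefBy_insert2, RefBy_insert3, RefBy_insert4, FForm.val]
    rcases hφ : φ.val I <;> rcases hψ : ψ.val I <;> simp_all [V4.conjv]
  | @conjB1 Γ Δ Θ Ω φ ψ h ih =>
    obtain ⟨I, hI⟩ := ih; refine ⟨I, ?_⟩; revert hI
    simp only [RefBy_insert1, RefBy_insert2, RefBy_insert3, RefBy_insert4, FForm.val]
    rcases hφ : φ.val I <;> rcases hψ : ψ.val I <;> simp_all [V4.conjv]
  | @conjB2 Γ Δ Θ Ω φ ψ h ih =>
    obtain ⟨I, hI⟩ := ih; refine ⟨I, ?_⟩; revert hI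
    simp only [RefBy_insert1, RefBy_insert2, RefBy_insert3, RefBy_insert4, FForm.val]
    rcases hφ : φ.val I <;> rcases hψ : ψ.val I <;> simp_all [V4.conjv]
  | @conjB3 Γ Δ Θ Ω φ ψ h ih =>
    obtain ⟨I, hI⟩ := ih; refine ⟨I, ?_⟩; revert hI
    simp only [RefBy_insert1, RefBy_insert2, RefBy_insert3, RefBy_insert4, FForm.val]
    rcases hφ : φ.val I <;> rcases hψ : ψ.val I <;> simp_all [V4.conjv]
  | @conjT1 Γ Δ Θ Ω φ ψ h ih =>
    obtain ⟨I, hI⟩ := ih; refine ⟨I, ?_⟩; revert hI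
    simp only [RefBy_insert1, RefBy_insert2, RefBy_insert3, RefBy_insert4, FForm.val]
    rcases hφ : φ.val I <;> rcases hψ : ψ.val I <;> simp_all [V4.conjv]
  | @conjT2 Γ Δ Θ Ω φ ψ h ih =>
    obtain ⟨I, hI⟩ := ih; refine ⟨I, ?_⟩; revert hI
    simp only [RefBy_insert1, RefBy_insert2, RefBy_insert3, RefBy_insert4, FForm.val]
    rcases hφ : φ.val I <;> rcases hψ : ψ.val I <;> simp_all [V4.conjv]
  | @impF1 Γ Δ Θ Ω φ ψ h ih =>
    obtain ⟨I, hI⟩ := ih; refine ⟨I, ?_⟩; revert hI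
    simp only [RefBy_insert1, RefBy_insert2, RefBy_insert3, RefBy_insert4, FForm.val]
    rcases hφ : φ.val I <;> rcases hψ : ψ.val I <;> simp_all [V4.impv]
  | @impF2 Γ Δ Θ Ω φ ψ h ih =>
    obtain ⟨I, hI⟩ := ih; refine ⟨I, ?_⟩; revert hI
    simp only [RefBy_insert1, RefBy_insert2, RefBy_insert3, RefBy_insert4, FForm.val]
    rcases hφ : φ.val I <;> rcases hψ : ψ.val I <;> simp_all [V4.impv]
  | @impN1 Γ Δ Θ Ω φ ψ h ih =>
    obtain ⟨I, hI⟩ := ih; refine ⟨I, ?_⟩; revert hI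
    simp only [RefBy_insert1, RefBy_insert2, RefBy_insert3, RefBy_insert4, FForm.val]
    rcases hφ : φ.val I <;> rcases hψ : ψ.val I <;> simp_all [V4.impv]
  | @impN2 Γ Δ Θ Ω φ ψ h ih =>
    obtain ⟨I, hI⟩ := ih; refine ⟨I, ?_⟩; revert hI
    simp only [RefBy_insert1, RefBy_insert2, RefBy_insert3, RefBy_insert4, FForm.val]
    rcases hφ : φ.val I <;> rcases hψ : ψ.val I <;> simp_all [V4.impv]
  | @impB1 Γ Δ Θ Ω φ ψ h ih =>
    obtain ⟨I, hI⟩ := ih; refine ⟨I, ?_⟩; revert hI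
    simp only [RefBy_insert1, RefBy_insert2, RefBy_insert3, RefBy_insert4, FForm.val]
    rcases hφ : φ.val I <;> rcases hψ : ψ.val I <;> simp_all [V4.impv]
  | @impB2 Γ Δ Θ Ω φ ψ h ih =>
    obtain ⟨I, hI⟩ := ih; refine ⟨I, ?_⟩; revert hI
    simp only [RefBy_insert1, RefBy_insert2, RefBy_insert3, RefBy_insert4, FForm.val]
    rcases hφ : φ.val I <;> rcases hψ : ψ.val I <;> simp_all [V4.impv]
  | @impT Γ Δ Θ Ω φ ψ h ih =>
    obtain ⟨I, hI⟩ := ih; refine ⟨I, ?_⟩; revert hI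
    simp only [RefBy_insert1, RefBy_insert2, RefBy_insert3, RefBy_insert4, FForm.val]
    rcases hφ : φ.val I <;> rcases hψ : ψ.val I <;> simp_all [V4.impv]
/-- Weight of a formula, used as termination measure. -/
def FForm.mu : FForm → ℕ
  | .atom _ => 1
  | .bb => 1
  | .nn => 1
  | .neg φ => φ.mu + 1
  | .conj φ ψ => 2 * (φ.mu + ψ.mu) + 1
  | .imp φ ψ => 2 * (φ.mu + ψ.mu) + 1

lemma FForm.mu_pos (φ : FForm) : 1 ≤ φ.mu := by
  cases φ <;> simp [FForm.mu] <;> omega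

/-- Weight of a four-sided sequent. -/
def wt (Γ₁ Γ₂ Γ₃ Γ₄ : Finset FForm) : ℕ :=
  Γ₁.sum FForm.mu + Γ₂.sum FForm.mu + Γ₃.sum FForm.mu + Γ₄.sum FForm.mu

lemma sum_insert_le (φ : FForm) (s : Finset FForm) :
    (insert φ s).sum FForm.mu ≤ φ.mu + s.sum FForm.mu := by
  by_cases h : φ ∈ s
  · rw [Finset.insert_eq_self.2 h]; omega
  · rw [Finset.sum_insert h]

lemma sum_erase_eq {φ : FForm} {s : Finset FForm} (h : φ ∈ s) :
    (s.erase φ).sum FForm.mu + φ.mu = s.sum FForm.mu :=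
  Finset.sum_erase_add s FForm.mu h

lemma basic_step (Γ₁ Γ₂ Γ₃ Γ₄ : Finset FForm)
    (hb : ∀ φ ∈ Γ₁ ∪ Γ₂ ∪ Γ₃ ∪ Γ₄, φ.IsBasic) :
    SF Γ₁ Γ₂ Γ₃ Γ₄ ∨ RF Γ₁ Γ₂ Γ₃ Γ₄ := by
  by_cases hn : FForm.nn ∈ Γ₂
  · left; rw [← Finset.insert_erase hn]; exact SF.axN _ _ _ _
  by_cases hbb : FForm.bb ∈ Γ₃
  · left; rw [← Finset.insert_erase hbb]; exact SF.axB _ _ _ _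
  by_cases hi : (Γ₁ ∩ Γ₂ ∩ Γ₃ ∩ Γ₄).Nonempty
  · obtain ⟨φ, hφ⟩ := hi
    simp only [Finset.mem_inter] at hφ
    obtain ⟨⟨⟨h1, h2⟩, h3⟩, h4⟩ := hφ
    left
    rw [← Finset.insert_erase h1]
    rw [← Finset.insert_erase h2]
    rw [← Finset.insert_erase h3]
    rw [← Finset.insert_erase h4]
    exact SF.ax _ _ _ _ φ
  · right
    exact RF.ax _ _ _ _ hb (Finset.not_nonempty_iff_eq_empty.1 hi) hn hbb

lemma wt_pos {φ : FForm} {s : Finset FForm} (h : φ ∈ s) : 1 ≤ s.sum FForm.mu :=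
  le_trans (FForm.mu_pos φ) (Finset.single_le_sum (fun i _ => Nat.zero_le _) h)

lemma sf_or_rf_aux (n : ℕ) : ∀ Γ₁ Γ₂ Γ₃ Γ₄ : Finset FForm, wt Γ₁ Γ₂ Γ₃ Γ₄ ≤ n →
    SF Γ₁ Γ₂ Γ₃ Γ₄ ∨ RF Γ₁ Γ₂ Γ₃ Γ₄ := by
  induction n with
  | zero =>
    intro Γ₁ Γ₂ Γ₃ Γ₄ hw
    apply basic_step
    intro φ hφ
    exfalso
    simp only [Finset.mem_union] at hφ
    unfold wt at hw
    rcases hφ with ((h | h) | h) | h <;> have := wt_pos h <;> omega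
  | succ n ih =>
    intro Γ₁ Γ₂ Γ₃ Γ₄ hw
    by_cases hba : ∀ φ ∈ Γ₁ ∪ Γ₂ ∪ Γ₃ ∪ Γ₄, φ.IsBasic
    · exact basic_step _ _ _ _ hba
    · push_neg at hba
      obtain ⟨φ₀, hmem, hnb⟩ := hba
      simp only [Finset.mem_union] at hmem
      rcases hmem with ((hc | hc) | hc) | hc

      · cases φ₀ with
        | atom p => simp [FForm.IsBasic] at hnb
        | bb => simp [FForm.IsBasic] at hnb
        | nn => simp [FForm.IsBasic] at hnb
        | neg φ =>
          clear hnb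
          have hins := Finset.insert_erase hc
          have e1 := sum_erase_eq hc
          simp only [FForm.mu] at e1
          have b1 : wt (Γ₁.erase (FForm.neg φ)) Γ₂ Γ₃ (insert φ Γ₄) ≤ n := by
            have i1 := sum_insert_le φ Γ₄
            simp only [wt] at hw ⊢
            omega
          have r1 := ih _ _ _ _ b1
          rcases r1 with s1 | f1
          · left
            rw [← hins]; exact SF.negF s1
          · right
            rw [← hins]; exact RF.negF f1
        | conj φ ψ =>
          clear hnb
          have hins := Finset.insert_erase hc
          have e1 := sum_erase_eq hc
          simp only [FForm.mu] at e1
          have b1 : wt (insert φ (insert ψ (Γ₁.erase (FForm.conj φ ψ)))) (insert φ (insert ψ Γ₂)) Γ₃ Γ₄ ≤ n := by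
            have i1 := sum_insert_le φ (insert ψ (Γ₁.erase (FForm.conj φ ψ)))
            have i2 := sum_insert_le ψ (Γ₁.erase (FForm.conj φ ψ))
            have i3 := sum_insert_le φ (insert ψ Γ₂)
            have i4 := sum_insert_le ψ Γ₂
            simp only [wt] at hw ⊢
            omega
          have r1 := ih _ _ _ _ b1
          have b2 : wt (insert φ (insert ψ (Γ₁.erase (FForm.conj φ ψ)))) Γ₂ (insert φ (insert ψ Γ₃)) Γ₄ ≤ n := by
            have i1 := sum_insert_le φ (insert ψ (Γ₁.erase (FForm.conj φ ψ)))
            have i2 := sum_insert_le ψ (Γ₁.erase (FForm.conj φ ψ))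
            have i3 := sum_insert_le φ (insert ψ Γ₃)
            have i4 := sum_insert_le ψ Γ₃
            simp only [wt] at hw ⊢
            omega
          have r2 := ih _ _ _ _ b2
          rcases r1 with s1 | f1
          · rcases r2 with s2 | f2
            · left
              rw [← hins]; exact SF.conjF s1 s2
            · right
              rw [← hins]; exact RF.conjF2 f2
          · right
            rw [← hins]; exact RF.conjF1 f1
        | imp φ ψ =>
          clear hnb
          have hins := Finset.insert_erase hc
          have e1 := sum_erase_eq hc
          simp only [FForm.mu] at e1
          have b1 : wt (Γ₁.erase (FForm.imp φ ψ)) Γ₂ (insert φ Γ₃) (insert φ Γ₄) ≤ n := by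
            have i1 := sum_insert_le φ Γ₃
            have i2 := sum_insert_le φ Γ₄
            simp only [wt] at hw ⊢
            omega
          have r1 := ih _ _ _ _ b1
          have b2 : wt (insert ψ (Γ₁.erase (FForm.imp φ ψ))) Γ₂ Γ₃ Γ₄ ≤ n := by
            have i1 := sum_insert_le ψ (Γ₁.erase (FForm.imp φ ψ))
            simp only [wt] at hw ⊢
            omega
          have r2 := ih _ _ _ _ b2
          rcases r1 with s1 | f1
          · rcases r2 with s2 | f2
            · left
              rw [← hins]; exact SF.impF s1 s2
            · right
              rw [← hins]; exact RF.impF2 f2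
          · right
            rw [← hins]; exact RF.impF1 f1
      · cases φ₀ with
        | atom p => simp [FForm.IsBasic] at hnb
        | bb => simp [FForm.IsBasic] at hnb
        | nn => simp [FForm.IsBasic] at hnb
        | neg φ =>
          clear hnb
          have hins := Finset.insert_erase hc
          have e1 := sum_erase_eq hc
          simp only [FForm.mu] at e1
          have b1 : wt Γ₁ (insert φ (Γ₂.erase (FForm.neg φ))) Γ₃ Γ₄ ≤ n := by
            have i1 := sum_insert_le φ (Γ₂.erase (FForm.neg φ))
            simp only [wt] at hw ⊢
            omega
          have r1 := ih _ _ _ _ b1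
          rcases r1 with s1 | f1
          · left
            rw [← hins]; exact SF.negN s1
          · right
            rw [← hins]; exact RF.negN f1
        | conj φ ψ =>
          clear hnb
          have hins := Finset.insert_erase hc
          have e1 := sum_erase_eq hc
          simp only [FForm.mu] at e1
          have b1 : wt Γ₁ (insert φ (insert ψ (Γ₂.erase (FForm.conj φ ψ)))) Γ₃ Γ₄ ≤ n := by
            have i1 := sum_insert_le φ (insert ψ (Γ₂.erase (FForm.conj φ ψ)))
            have i2 := sum_insert_le ψ (Γ₂.erase (FForm.conj φ ψ))
            simp only [wt] at hw ⊢
            omega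
          have r1 := ih _ _ _ _ b1
          have b2 : wt Γ₁ (insert φ (Γ₂.erase (FForm.conj φ ψ))) Γ₃ (insert φ Γ₄) ≤ n := by
            have i1 := sum_insert_le φ (Γ₂.erase (FForm.conj φ ψ))
            have i2 := sum_insert_le φ Γ₄
            simp only [wt] at hw ⊢
            omega
          have r2 := ih _ _ _ _ b2
          have b3 : wt Γ₁ (insert ψ (Γ₂.erase (FForm.conj φ ψ))) Γ₃ (insert ψ Γ₄) ≤ n := by
            have i1 := sum_insert_le ψ (Γ₂.erase (FForm.conj φ ψ))
            have i2 := sum_insert_le ψ Γ₄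
            simp only [wt] at hw ⊢
            omega
          have r3 := ih _ _ _ _ b3
          rcases r1 with s1 | f1
          · rcases r2 with s2 | f2
            · rcases r3 with s3 | f3
              · left
                rw [← hins]; exact SF.conjN s1 s2 s3
              · right
                rw [← hins]; exact RF.conjN3 f3
            · right
              rw [← hins]; exact RF.conjN2 f2
          · right
            rw [← hins]; exact RF.conjN1 f1
        | imp φ ψ =>
          clear hnb
          have hins := Finset.insert_erase hc
          have e1 := sum_erase_eq hc
          simp only [FForm.mu] at e1
          have b1 : wt Γ₁ (Γ₂.erase (FForm.imp φ ψ)) (insert φ Γ₃) (insert φ Γ₄) ≤ n := by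
            have i1 := sum_insert_le φ Γ₃
            have i2 := sum_insert_le φ Γ₄
            simp only [wt] at hw ⊢
            omega
          have r1 := ih _ _ _ _ b1
          have b2 : wt Γ₁ (insert ψ (Γ₂.erase (FForm.imp φ ψ))) Γ₃ Γ₄ ≤ n := by
            have i1 := sum_insert_le ψ (Γ₂.erase (FForm.imp φ ψ))
            simp only [wt] at hw ⊢
            omega
          have r2 := ih _ _ _ _ b2
          rcases r1 with s1 | f1
          · rcases r2 with s2 | f2
            · left
              rw [← hins]; exact SF.impN s1 s2
            · right
              rw [← hins]; exact RF.impN2 f2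
          · right
            rw [← hins]; exact RF.impN1 f1
      · cases φ₀ with
        | atom p => simp [FForm.IsBasic] at hnb
        | bb => simp [FForm.IsBasic] at hnb
        | nn => simp [FForm.IsBasic] at hnb
        | neg φ =>
          clear hnb
          have hins := Finset.insert_erase hc
          have e1 := sum_erase_eq hc
          simp only [FForm.mu] at e1
          have b1 : wt Γ₁ Γ₂ (insert φ (Γ₃.erase (FForm.neg φ))) Γ₄ ≤ n := by
            have i1 := sum_insert_le φ (Γ₃.erase (FForm.neg φ))
            simp only [wt] at hw ⊢
            omega
          have r1 := ih _ _ _ _ b1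
          rcases r1 with s1 | f1
          · left
            rw [← hins]; exact SF.negB s1
          · right
            rw [← hins]; exact RF.negB f1
        | conj φ ψ =>
          clear hnb
          have hins := Finset.insert_erase hc
          have e1 := sum_erase_eq hc
          simp only [FForm.mu] at e1
          have b1 : wt Γ₁ Γ₂ (insert φ (insert ψ (Γ₃.erase (FForm.conj φ ψ)))) Γ₄ ≤ n := by
            have i1 := sum_insert_le φ (insert ψ (Γ₃.erase (FForm.conj φ ψ)))
            have i2 := sum_insert_le ψ (Γ₃.erase (FForm.conj φ ψ))
            simp only [wt] at hw ⊢
            omega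
          have r1 := ih _ _ _ _ b1
          have b2 : wt Γ₁ Γ₂ (insert φ (Γ₃.erase (FForm.conj φ ψ))) (insert φ Γ₄) ≤ n := by
            have i1 := sum_insert_le φ (Γ₃.erase (FForm.conj φ ψ))
            have i2 := sum_insert_le φ Γ₄
            simp only [wt] at hw ⊢
            omega
          have r2 := ih _ _ _ _ b2
          have b3 : wt Γ₁ Γ₂ (insert ψ (Γ₃.erase (FForm.conj φ ψ))) (insert ψ Γ₄) ≤ n := by
            have i1 := sum_insert_le ψ (Γ₃.erase (FForm.conj φ ψ))
            have i2 := sum_insert_le ψ Γ₄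
            simp only [wt] at hw ⊢
            omega
          have r3 := ih _ _ _ _ b3
          rcases r1 with s1 | f1
          · rcases r2 with s2 | f2
            · rcases r3 with s3 | f3
              · left
                rw [← hins]; exact SF.conjB s1 s2 s3
              · right
                rw [← hins]; exact RF.conjB3 f3
            · right
              rw [← hins]; exact RF.conjB2 f2
          · right
            rw [← hins]; exact RF.conjB1 f1
        | imp φ ψ =>
          clear hnb
          have hins := Finset.insert_erase hc
          have e1 := sum_erase_eq hc
          simp only [FForm.mu] at e1
          have b1 : wt Γ₁ Γ₂ (insert φ (Γ₃.erase (FForm.imp φ ψ))) (insert φ Γ₄) ≤ n := by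
            have i1 := sum_insert_le φ (Γ₃.erase (FForm.imp φ ψ))
            have i2 := sum_insert_le φ Γ₄
            simp only [wt] at hw ⊢
            omega
          have r1 := ih _ _ _ _ b1
          have b2 : wt Γ₁ Γ₂ (insert ψ (Γ₃.erase (FForm.imp φ ψ))) Γ₄ ≤ n := by
            have i1 := sum_insert_le ψ (Γ₃.erase (FForm.imp φ ψ))
            simp only [wt] at hw ⊢
            omega
          have r2 := ih _ _ _ _ b2
          rcases r1 with s1 | f1
          · rcases r2 with s2 | f2
            · left
              rw [← hins]; exact SF.impB s1 s2
            · right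
              rw [← hins]; exact RF.impB2 f2
          · right
            rw [← hins]; exact RF.impB1 f1
      · cases φ₀ with
        | atom p => simp [FForm.IsBasic] at hnb
        | bb => simp [FForm.IsBasic] at hnb
        | nn => simp [FForm.IsBasic] at hnb
        | neg φ =>
          clear hnb
          have hins := Finset.insert_erase hc
          have e1 := sum_erase_eq hc
          simp only [FForm.mu] at e1
          have b1 : wt (insert φ Γ₁) Γ₂ Γ₃ (Γ₄.erase (FForm.neg φ)) ≤ n := by
            have i1 := sum_insert_le φ Γ₁
            simp only [wt] at hw ⊢
            omega
          have r1 := ih _ _ _ _ b1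
          rcases r1 with s1 | f1
          · left
            rw [← hins]; exact SF.negT s1
          · right
            rw [← hins]; exact RF.negT f1
        | conj φ ψ =>
          clear hnb
          have hins := Finset.insert_erase hc
          have e1 := sum_erase_eq hc
          simp only [FForm.mu] at e1
          have b1 : wt Γ₁ Γ₂ Γ₃ (insert φ (Γ₄.erase (FForm.conj φ ψ))) ≤ n := by
            have i1 := sum_insert_le φ (Γ₄.erase (FForm.conj φ ψ))
            simp only [wt] at hw ⊢
            omega
          have r1 := ih _ _ _ _ b1
          have b2 : wt Γ₁ Γ₂ Γ₃ (insert ψ (Γ₄.erase (FForm.conj φ ψ))) ≤ n := by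
            have i1 := sum_insert_le ψ (Γ₄.erase (FForm.conj φ ψ))
            simp only [wt] at hw ⊢
            omega
          have r2 := ih _ _ _ _ b2
          rcases r1 with s1 | f1
          · rcases r2 with s2 | f2
            · left
              rw [← hins]; exact SF.conjT s1 s2
            · right
              rw [← hins]; exact RF.conjT2 f2
          · right
            rw [← hins]; exact RF.conjT1 f1
        | imp φ ψ =>
          clear hnb
          have hins := Finset.insert_erase hc
          have e1 := sum_erase_eq hc
          simp only [FForm.mu] at e1
          have b1 : wt (insert φ Γ₁) (insert φ Γ₂) Γ₃ (insert ψ (Γ₄.erase (FForm.imp φ ψ))) ≤ n := by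
            have i1 := sum_insert_le φ Γ₁
            have i2 := sum_insert_le φ Γ₂
            have i3 := sum_insert_le ψ (Γ₄.erase (FForm.imp φ ψ))
            simp only [wt] at hw ⊢
            omega
          have r1 := ih _ _ _ _ b1
          rcases r1 with s1 | f1
          · left
            rw [← hins]; exact SF.impT s1
          · right
            rw [← hins]; exact RF.impT f1

theorem sf_or_rf (Γ₁ Γ₂ Γ₃ Γ₄ : Finset FForm) :
    SF Γ₁ Γ₂ Γ₃ Γ₄ ∨ RF Γ₁ Γ₂ Γ₃ Γ₄ :=
  sf_or_rf_aux (wt Γ₁ Γ₂ Γ₃ Γ₄) Γ₁ Γ₂ Γ₃ Γ₄ le_rfl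
lemma val_congr {I J : ℕ → V4} : ∀ {φ : FForm}, (∀ p ∈ φ.fvars, I p = J p) →
    φ.val I = φ.val J := by
  intro φ
  induction φ with
  | atom p => intro h; exact h p (by simp [FForm.fvars])
  | bb => intro _; rfl
  | nn => intro _; rfl
  | neg φ ih => intro h; simp only [FForm.val]; rw [ih h]
  | conj φ ψ ih1 ih2 =>
    intro h; simp only [FForm.val]
    rw [ih1 fun p hp => h p (by simp [FForm.fvars, hp]),
      ih2 fun p hp => h p (by simp [FForm.fvars, hp])]
  | imp φ ψ ih1 ih2 =>
    intro h; simp only [FForm.val]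
    rw [ih1 fun p hp => h p (by simp [FForm.fvars, hp]),
      ih2 fun p hp => h p (by simp [FForm.fvars, hp])]

lemma isModel_of_ne {I : ℕ → V4} {φ : FForm} (h1 : φ.val I ≠ .f) (h2 : φ.val I ≠ .n) :
    FForm.IsModel I φ := by
  unfold FForm.IsModel; rcases h : φ.val I <;> simp_all

lemma not_true_of_refuted {I : ℕ → V4} {Γ₁ Γ₂ Γ₃ Γ₄ : Finset FForm}
    (h : FAntiRefutedBy I Γ₁ Γ₂ Γ₃ Γ₄) (ht : FSeqTrue I Γ₁ Γ₂ Γ₃ Γ₄) : False := by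
  obtain ⟨h1, h2, h3, h4⟩ := h
  rcases ht with ⟨φ, hm, hv⟩ | ⟨φ, hm, hv⟩ | ⟨φ, hm, hv⟩ | ⟨φ, hm, hv⟩
  exacts [h1 φ hm hv, h2 φ hm hv, h3 φ hm hv, h4 φ hm hv]

lemma RF_complete {Γ₁ Γ₂ Γ₃ Γ₄ : Finset FForm} (h : FAntiRefutable Γ₁ Γ₂ Γ₃ Γ₄) :
    RF Γ₁ Γ₂ Γ₃ Γ₄ := by
  rcases sf_or_rf Γ₁ Γ₂ Γ₃ Γ₄ with hs | hr
  · obtain ⟨I, hI⟩ := h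
    exact absurd (SF_sound hs I) (fun ht => not_true_of_refuted hI ht)
  · exact hr

/-- Soundness of `ME_F¹` relative to the intended semantics. -/
theorem MEF1_sound {S Pi Θ : Finset ℕ} {Γ Δ : Finset FForm}
    (h : MEF1 S Γ Pi Δ Θ) :
    Γ.biUnion FForm.fvars ⊆ S ∪ Pi ∪ Θ →
    ∀ I : ℕ → V4, FMostConsistentModel {V4.b} I (Γ : Set FForm) →
      (∀ q ∈ S, I q = .b) → (∀ p ∈ Pi, I p ≠ .b) →
      ∃ δ ∈ Δ, FForm.IsModel I δ := by
  induction h with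
  | @m1 S Pi Θ Γ Δ q hRF =>
    intro hside I hmc hS hPi
    exfalso
    obtain ⟨J, hJ1, hJ2, hJ3, _⟩ := RF_sound hRF
    have hJmod : ∀ φ ∈ Γ, FForm.IsModel J φ := fun φ hφ =>
      isModel_of_ne (hJ1 φ hφ) (hJ2 φ hφ)
    have hJnb : ∀ p ∈ insert q (Θ ∪ Pi), J p ≠ .b := by
      intro p hp
      exact hJ3 (FForm.atom p) (Finset.mem_image_of_mem _ hp)
    set V : Finset ℕ := Γ.biUnion FForm.fvars with hV
    set J' : ℕ → V4 := fun p => if p ∈ V then J p else V4.n with hJ'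
    have hagree : ∀ φ ∈ Γ, φ.val J' = φ.val J := by
      intro φ hφ
      apply val_congr
      intro p hp
      have : p ∈ V := Finset.mem_biUnion.2 ⟨φ, hφ, hp⟩
      simp [hJ', this]
    apply hmc.2
    refine ⟨J', ?_, ?_⟩
    · intro φ hφ
      have hφ' : φ ∈ Γ := hφ
      rw [FForm.IsModel, hagree φ hφ']
      exact hJmod φ hφ'
    · constructor
      · intro p hp
        simp only [Set.mem_setOf_eq, Set.mem_singleton_iff] at hp ⊢
        have hpV : p ∈ V := by
          by_contra hc; simp [hJ', hc] at hp
        have hpJ : J p = .b := by simpa [hJ', hpV] using hp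
        have hpn : p ∉ insert q (Θ ∪ Pi) := fun hmem => hJnb p hmem hpJ
        have hpside : p ∈ insert q S ∪ Pi ∪ Θ := hside hpV
        have hpS : p ∈ insert q S := by
          simp only [Finset.mem_union] at hpside
          rcases hpside with (h' | h') | h'
          · exact h'
          · exact absurd (by simp [Finset.mem_insert, Finset.mem_union, h']) hpn
          · exact absurd (by simp [Finset.mem_insert, Finset.mem_union, h']) hpn
        exact hS p hpS
      · intro hsub
        have hq1 : I q ∈ ({V4.b} : Set V4) := by
          simp only [Set.mem_singleton_iff]
          exact hS q (Finset.mem_insert_self q S)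
        have hq2 : J' q ∈ ({V4.b} : Set V4) := hsub hq1
        simp only [Set.mem_singleton_iff] at hq2
        by_cases hqV : q ∈ V
        · exact hJnb q (Finset.mem_insert_self _ _) (by simpa [hJ', hqV] using hq2)
        · simp [hJ', hqV] at hq2
  | @m2 S Pi Θ Γ Δ hSF =>
    intro _ I hmc hS hPi
    have ht := SF_sound hSF I
    rcases ht with ⟨φ, hm, hv⟩ | ⟨φ, hm, hv⟩ | ⟨φ, hm, hv⟩ | ⟨φ, hm, hv⟩
    · rcases Finset.mem_union.1 hm with hm | hm
      · obtain ⟨p, hp, rfl⟩ := Finset.mem_image.1 hm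
        rw [show (FForm.atom p).val I = I p from rfl, hS p hp] at hv; exact absurd hv (by simp)
      · rcases hmc.1 φ hm with h | h <;> simp [h] at hv
    · rcases Finset.mem_union.1 hm with hm | hm
      · obtain ⟨p, hp, rfl⟩ := Finset.mem_image.1 hm
        rw [show (FForm.atom p).val I = I p from rfl, hS p hp] at hv; exact absurd hv (by simp)
      · rcases hmc.1 φ hm with h | h <;> simp [h] at hv
    · rcases Finset.mem_union.1 hm with hm | hm
      · obtain ⟨p, hp, rfl⟩ := Finset.mem_image.1 hm
        exact absurd hv (hPi p hp)
      · exact ⟨φ, hm, Or.inl hv⟩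
    · rcases Finset.mem_union.1 hm with hm | hm
      · obtain ⟨p, hp, rfl⟩ := Finset.mem_image.1 hm
        rw [show (FForm.atom p).val I = I p from rfl, hS p hp] at hv; exact absurd hv (by simp)
      · exact ⟨φ, hm, Or.inr hv⟩
  | @m3 S Pi Θ Γ Δ q h1 h2 ih1 ih2 =>
    intro hside I hmc hS hPi
    by_cases hq : I q = .b
    · refine ih1 ?_ I hmc ?_ hPi
      · intro p hp
        have := hside hp
        simp only [Finset.mem_union, Finset.mem_insert] at this ⊢
        tauto
      · intro p hp
        rcases Finset.mem_insert.1 hp with rfl | hp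
        · exact hq
        · exact hS p hp
    · refine ih2 ?_ I hmc hS ?_
      · intro p hp
        have := hside hp
        simp only [Finset.mem_union, Finset.mem_insert] at this ⊢
        tauto
      · intro p hp
        rcases Finset.mem_insert.1 hp with rfl | hp
        · exact hq
        · exact hPi p hp
/-- Completeness of `ME_F¹`. -/
theorem MEF1_build (Γ Δ : Finset FForm)
    (hent : FMinEntails {V4.b} (Γ : Set FForm) (Δ : Set FForm)) :
    ∀ Θ S Pi : Finset ℕ, S ∪ Pi ∪ Θ = (Γ ∪ Δ).biUnion FForm.fvars →
      Disjoint S Pi → Disjoint S Θ → Disjoint Pi Θ →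
      MEF1 S Γ Pi Δ Θ := by
  intro Θ
  induction Θ using Finset.induction_on with
  | empty =>
    intro S Pi hu hSP _ _
    by_cases hq : ∃ q ∈ S, FAntiRefutable Γ Γ ((insert q ((∅ : Finset ℕ) ∪ Pi)).image FForm.atom) ∅
    · obtain ⟨q, hqS, href⟩ := hq
      have hRF := RF_complete href
      have := MEF1.m1 (S := S.erase q) (Δ := Δ) hRF
      rwa [Finset.insert_erase hqS] at this
    · push_neg at hq
      apply MEF1.m2
      rcases sf_or_rf (S.image FForm.atom ∪ Γ) (S.image FForm.atom ∪ Γ)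
        (Pi.image FForm.atom ∪ Δ) (S.image FForm.atom ∪ Δ) with hsf | hrf
      · exact hsf
      · exfalso
        obtain ⟨I, hI1, hI2, hI3, hI4⟩ := RF_sound hrf
        have hSb : ∀ p ∈ S, I p = .b := by
          intro p hp
          have hm : FForm.atom p ∈ S.image FForm.atom := Finset.mem_image_of_mem _ hp
          have n1 := hI1 _ (Finset.mem_union_left _ hm)
          have n2 := hI2 _ (Finset.mem_union_left _ hm)
          have n4 := hI4 _ (Finset.mem_union_left _ hm)
          rcases h : I p <;> simp_all [FForm.val]
        have hΓmod : ∀ φ ∈ Γ, FForm.IsModel I φ := fun φ hφ =>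
          isModel_of_ne (hI1 φ (Finset.mem_union_right _ hφ))
            (hI2 φ (Finset.mem_union_right _ hφ))
        have hPinb : ∀ p ∈ Pi, I p ≠ .b := fun p hp =>
          hI3 _ (Finset.mem_union_left _ (Finset.mem_image_of_mem _ hp))
        have hΔnb : ∀ δ ∈ Δ, δ.val I ≠ .b ∧ δ.val I ≠ .t := fun δ hδ =>
          ⟨hI3 δ (Finset.mem_union_right _ hδ), hI4 δ (Finset.mem_union_right _ hδ)⟩
        set V : Finset ℕ := (Γ ∪ Δ).biUnion FForm.fvars with hV
        set I' : ℕ → V4 := fun p => if p ∈ V then I p else V4.n with hI'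
        have hagree : ∀ φ ∈ Γ ∪ Δ, φ.val I' = φ.val I := by
          intro φ hφ
          apply val_congr
          intro p hp
          have : p ∈ V := Finset.mem_biUnion.2 ⟨φ, hφ, hp⟩
          simp [hI', this]
        have hSV : ∀ p ∈ S, p ∈ V := by
          intro p hp; rw [← hu]; simp [hp]
        have hI'b : ∀ p, I' p = V4.b ↔ p ∈ S := by
          intro p
          constructor
          · intro h
            by_cases hv : p ∈ V
            · have hIb : I p = .b := by simpa [hI', hv] using h
              have : p ∈ S ∪ Pi ∪ (∅ : Finset ℕ) := hu ▸ hv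
              simp only [Finset.union_empty, Finset.mem_union] at this
              rcases this with h' | h'
              · exact h'
              · exact absurd hIb (hPinb p h')
            · simp [hI', hv] at h
          · intro h
            simp [hI', hSV p h, hSb p h]
        have hI'mod : FForm.IsModelSet I' (Γ : Set FForm) := by
          intro φ hφ
          have hφ' : φ ∈ Γ := hφ
          rw [FForm.IsModel, hagree φ (Finset.mem_union_left _ hφ')]
          exact hΓmod φ hφ'
        have hmc : FMostConsistentModel {V4.b} I' (Γ : Set FForm) := by
          refine ⟨hI'mod, ?_⟩
          rintro ⟨J, hJmod, hJss⟩
          have hsub : ∀ p, J p = V4.b → p ∈ S := by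
            intro p hp
            have := hJss.1 (show p ∈ {p | J p ∈ ({V4.b} : Set V4)} by simpa using hp)
            simp only [Set.mem_setOf_eq, Set.mem_singleton_iff] at this
            exact (hI'b p).1 this
          obtain ⟨q, hqI', hqJ⟩ := Set.exists_of_ssubset hJss
          simp only [Set.mem_setOf_eq, Set.mem_singleton_iff] at hqI' hqJ
          have hqS : q ∈ S := (hI'b q).1 hqI'
          apply hq q hqS
          refine ⟨J, ?_, ?_, ?_, ?_⟩
          · intro φ hφ
            rcases hJmod φ hφ with h | h <;> simp [h]
          · intro φ hφ
            rcases hJmod φ hφ with h | h <;> simp [h]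
          · intro φ hφ
            obtain ⟨p, hp, rfl⟩ := Finset.mem_image.1 hφ
            simp only [Finset.empty_union, Finset.mem_insert] at hp
            rcases hp with rfl | hp
            · exact hqJ
            · intro hc
              have : p ∈ S := hsub p hc
              exact absurd hp (Finset.disjoint_left.1 hSP this)
          · intro φ hφ; exact absurd hφ (Finset.notMem_empty φ)
        obtain ⟨δ, hδΔ, hδI'⟩ := hent I' hmc
        have hδΔ' : δ ∈ Δ := hδΔ
        rw [FForm.IsModel, hagree δ (Finset.mem_union_right _ hδΔ')] at hδI'
        rcases hδI' with h | h
        · exact (hΔnb δ hδΔ').1 h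
        · exact (hΔnb δ hδΔ').2 h
  | @insert q Θ₀ hqΘ ih =>
    intro S Pi hu hSP hSΘ hPΘ
    have hqS : q ∉ S := fun h => Finset.disjoint_left.1 hSΘ h (Finset.mem_insert_self _ _)
    have hqPi : q ∉ Pi := fun h => Finset.disjoint_left.1 hPΘ h (Finset.mem_insert_self _ _)
    apply MEF1.m3
    · apply ih (insert q S) Pi
      · rw [← hu]; ext p
        simp only [Finset.mem_union, Finset.mem_insert]; tauto
      · rw [Finset.disjoint_left]
        intro p hp
        rcases Finset.mem_insert.1 hp with rfl | hp
        · exact hqPi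
        · exact Finset.disjoint_left.1 hSP hp
      · rw [Finset.disjoint_left]
        intro p hp hpΘ
        rcases Finset.mem_insert.1 hp with rfl | hp
        · exact hqΘ hpΘ
        · exact Finset.disjoint_left.1 hSΘ hp (Finset.mem_insert_of_mem hpΘ)
      · rw [Finset.disjoint_left]
        intro p hp hpΘ
        exact Finset.disjoint_left.1 hPΘ hp (Finset.mem_insert_of_mem hpΘ)
    · apply ih S (insert q Pi)
      · rw [← hu]; ext p
        simp only [Finset.mem_union, Finset.mem_insert]; tauto
      · rw [Finset.disjoint_left]
        intro p hp hq'
        rcases Finset.mem_insert.1 hq' with rfl | hq'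
        · exact hqS hp
        · exact Finset.disjoint_left.1 hSP hp hq'
      · rw [Finset.disjoint_left]
        intro p hp hpΘ
        exact Finset.disjoint_left.1 hSΘ hp (Finset.mem_insert_of_mem hpΘ)
      · rw [Finset.disjoint_left]
        intro p hp hpΘ
        rcases Finset.mem_insert.1 hp with rfl | hp
        · exact hqΘ hpΘ
        · exact Finset.disjoint_left.1 hPΘ hp (Finset.mem_insert_of_mem hpΘ)

/-- Adequacy of `ME_F¹` for four-valued minimal entailment with `𝓘 = {b}`:
for finite F-theories `Γ` and `Δ`, `Γ ⊨^{b}_F Δ` iff the sequent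
`∅;Γ,∅̄⇒Δ;Var(Γ∪Δ)` is provable in `ME_F¹`. -/
theorem MEF1_adequate (Γ Δ : Finset FForm) :
    FMinEntails {V4.b} (Γ : Set FForm) (Δ : Set FForm) ↔
      MEF1 ∅ Γ ∅ Δ ((Γ ∪ Δ).biUnion FForm.fvars) := by
  constructor
  · intro hent
    exact MEF1_build Γ Δ hent _ ∅ ∅ (by simp) (by simp) (by simp) (by simp)
  · intro hprov I hmc
    have hside : Γ.biUnion FForm.fvars ⊆ ∅ ∪ ∅ ∪ (Γ ∪ Δ).biUnion FForm.fvars := by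
      intro p hp
      simp only [Finset.empty_union]
      obtain ⟨φ, hφ, hp'⟩ := Finset.mem_biUnion.1 hp
      exact Finset.mem_biUnion.2 ⟨φ, Finset.mem_union_left _ hφ, hp'⟩
    obtain ⟨δ, hδ, hm⟩ := MEF1_sound hprov hside I hmc (by simp) (by simp)
    exact ⟨δ, hδ, hm⟩
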